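/- arXiv:1306.1967 — 6 statements merged into one kernel-verified Lean document; each statement's English description precedes it below -/
import Mathlib

section
/- Let G be a split graph whose vertex set is partitioned into k independent sets P_1, ..., P_k (a proper k-coloring). Then for each part P_i, there is a subset H ⊆ P_i with |H| ≥ (|P_i| - 1) / 2^(k-1) such that H is homogeneous in G, i.e., every vertex outside H is either adjacent to all vertices of H or to none. -/
variable {V : Type*}

/-- A set is independent: pairwise nonadjacent. -/
def IsIndep (G : SimpleGraph V) (s : Set V) : Prop :=
  s.Pairwise fun u v => ¬ G.Adj u v

/-- `H` is homogeneous in `G`: every vertex outside `H` is adjacent to all of `H` or none. -/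
def IsHomog (G : SimpleGraph V) (H : Set V) : Prop :=
  ∀ v ∉ H, (∀ h ∈ H, G.Adj v h) ∨ (∀ h ∈ H, ¬ G.Adj v h)

/-- A split graph: vertices partition into a clique and an independent set. -/
def IsSplit (G : SimpleGraph V) : Prop :=
  ∃ C : Set V, G.IsClique C ∧ IsIndep G Cᶜ

/-- `f` is an `M`-partition of `G`: entries `some true`/`some false`/`none` mean 1/0/*. -/
def IsMPartition {m : ℕ} (M : Matrix (Fin m) (Fin m) (Option Bool))
    (G : SimpleGraph V) (f : V → Fin m) : Prop :=
  ∀ u v : V, u ≠ v →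
    (M (f u) (f v) = some true → G.Adj u v) ∧
    (M (f u) (f v) = some false → ¬ G.Adj u v)

def HasMPartition {m : ℕ} (M : Matrix (Fin m) (Fin m) (Option Bool))
    (G : SimpleGraph V) : Prop :=
  ∃ f, IsMPartition M G f

/-- `G` is a minimal `M`-obstruction: no `M`-partition, but every vertex-deleted
induced subgraph has one. -/
def IsMinimalMObstruction {m : ℕ} (M : Matrix (Fin m) (Fin m) (Option Bool))
    (G : SimpleGraph V) : Prop :=
  ¬ HasMPartition M G ∧ ∀ v : V, HasMPartition M (G.induce {v}ᶜ)

/-- A partition of `V(G)` into `k` independent sets followed by `ℓ` cliques. -/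
def IsKLPartition (G : SimpleGraph V) (k ℓ : ℕ) (f : V → Fin (k + ℓ)) : Prop :=
  ∀ i : Fin (k + ℓ),
    if (i : ℕ) < k then IsIndep G (f ⁻¹' {i}) else G.IsClique (f ⁻¹' {i})

private lemma halve {V : Type*} (G : SimpleGraph V) (S : Finset V) :
    ∀ Q : Finset V, ∃ H : Finset V, H ⊆ Q ∧ Q.card ≤ 2 ^ S.card * H.card ∧
      ∀ s ∈ S, (∀ h ∈ H, G.Adj s h) ∨ (∀ h ∈ H, ¬ G.Adj s h) := by
  classical
  induction S using Finset.induction_on with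
  | empty => exact fun Q => ⟨Q, le_refl _, by simp, by simp⟩
  | @insert s S hs ih =>
    intro Q
    set Q1 := Q.filter (fun v => G.Adj s v) with hQ1
    set Q2 := Q.filter (fun v => ¬ G.Adj s v) with hQ2
    have hsum : Q1.card + Q2.card = Q.card := Q.card_filter_add_card_filter_not _
    rcases le_total Q1.card Q2.card with hle | hle
    · obtain ⟨H, hHQ, hcard, huni⟩ := ih Q2
      refine ⟨H, hHQ.trans (Finset.filter_subset _ _), ?_, ?_⟩
      · calc Q.card ≤ 2 * Q2.card := by omega
          _ ≤ 2 * (2 ^ S.card * H.card) := by omega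
          _ = 2 ^ (insert s S).card * H.card := by
              rw [Finset.card_insert_of_notMem hs, pow_succ]; ring
      · intro t ht
        rcases Finset.mem_insert.mp ht with rfl | ht
        · exact Or.inr fun h hh => (Finset.mem_filter.mp (hHQ hh)).2
        · exact huni t ht
    · obtain ⟨H, hHQ, hcard, huni⟩ := ih Q1
      refine ⟨H, hHQ.trans (Finset.filter_subset _ _), ?_, ?_⟩
      · calc Q.card ≤ 2 * Q1.card := by omega
          _ ≤ 2 * (2 ^ S.card * H.card) := by omega
          _ = 2 ^ (insert s S).card * H.card := by
              rw [Finset.card_insert_of_notMem hs, pow_succ]; ring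
      · intro t ht
        rcases Finset.mem_insert.mp ht with rfl | ht
        · exact Or.inl fun h hh => (Finset.mem_filter.mp (hHQ hh)).2
        · exact huni t ht

/-- in a split graph properly `k`-colored by `f`, each color class `P_i`
contains a homogeneous set `H` with `|H| >= (|P_i| - 1) / 2^(k-1)`. -/
theorem stmt0 {V : Type*} [Fintype V] (G : SimpleGraph V) (hG : IsSplit G)
    (k : ℕ) (f : V → Fin k) (hf : ∀ i : Fin k, IsIndep G (f ⁻¹' {i})) (i : Fin k) :
    ∃ H : Set V, H ⊆ f ⁻¹' {i} ∧ IsHomog G H ∧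
      (f ⁻¹' {i}).ncard - 1 ≤ 2 ^ (k - 1) * H.ncard := by
  classical
  obtain ⟨C, hC, hI⟩ := hG
  set P : Finset V := (f ⁻¹' {i}).toFinset with hP
  set Qf : Finset V := P.filter (fun v => v ∉ C) with hQf
  set Sf : Finset V := Finset.univ.filter (fun v => v ∈ C ∧ f v ≠ i) with hSf
  -- each clique vertex has a distinct color
  have hinj : Set.InjOn f ↑Sf := by
    intro u hu v hv huv
    by_contra hne
    have hu' := (Finset.mem_filter.mp hu).2
    have hv' := (Finset.mem_filter.mp hv).2
    have hadj := hC hu'.1 hv'.1 hne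
    exact hf (f u) (by simp) (by simp [huv]) hne hadj
  have hScard : Sf.card ≤ k - 1 := by
    have himg : Sf.image f ⊆ Finset.univ.erase i := by
      intro j hj
      obtain ⟨v, hv, rfl⟩ := Finset.mem_image.mp hj
      exact Finset.mem_erase.mpr ⟨(Finset.mem_filter.mp hv).2.2, Finset.mem_univ _⟩
    have := Finset.card_le_card himg
    rwa [Finset.card_image_of_injOn hinj, Finset.card_erase_of_mem (Finset.mem_univ i),
      Finset.card_univ, Fintype.card_fin] at this
  -- P minus Qf has at most one element
  have hPQ : P.card ≤ Qf.card + 1 := by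
    have h1 : (P.filter (fun v => v ∈ C)).card ≤ 1 := by
      rw [Finset.card_le_one]
      intro u hu v hv
      by_contra hne
      have hu' := Finset.mem_filter.mp hu
      have hv' := Finset.mem_filter.mp hv
      have hadj := hC hu'.2 hv'.2 hne
      have hui : f u = i := by simpa [hP, Set.mem_preimage] using hu'.1
      have hvi : f v = i := by simpa [hP, Set.mem_preimage] using hv'.1
      exact hf i (by simp [hui]) (by simp [hvi]) hne hadj
    have := P.card_filter_add_card_filter_not (p := fun v => v ∈ C)
    simp only [hQf] at *
    omega
  obtain ⟨H, hHQ, hcard, huni⟩ := halve G Sf Qf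
  refine ⟨↑H, ?_, ?_, ?_⟩
  · intro v hv
    have := Finset.mem_filter.mp (hHQ hv)
    simpa [hP, Set.mem_preimage] using this.1
  · intro v hv
    by_cases hvi : f v = i
    · refine Or.inr fun h hh => ?_
      have hhi : f h = i := by
        have := Finset.mem_filter.mp (hHQ hh)
        simpa [hP] using this.1
      exact hf i (by simp [hvi]) (by simp [hhi]) (by rintro rfl; exact hv hh)
    · by_cases hvC : v ∈ C
      · have hvS : v ∈ Sf := Finset.mem_filter.mpr ⟨Finset.mem_univ _, hvC, hvi⟩
        rcases huni v hvS with h | h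
        · exact Or.inl fun x hx => h x hx
        · exact Or.inr fun x hx => h x hx
      · refine Or.inr fun h hh => ?_
        have hhC : h ∉ C := (Finset.mem_filter.mp (hHQ hh)).2
        exact hI hvC hhC (by rintro rfl; exact hv hh)
  · have hP' : (f ⁻¹' {i}).ncard = P.card := by
      rw [hP, Set.ncard_eq_toFinset_card']
    have hH' : (↑H : Set V).ncard = H.card := Set.ncard_coe_finset H
    have h2 : (2:ℕ) ^ Sf.card ≤ 2 ^ (k - 1) := Nat.pow_le_pow_right (by norm_num) hScard
    have : Qf.card ≤ 2 ^ (k - 1) * H.card :=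
      hcard.trans (Nat.mul_le_mul_right _ h2)
    rw [hP', hH']
    omega
end

section
/- Let G be a split graph whose vertex set is partitioned into ℓ cliques Q_1, ..., Q_ℓ. Then for each part Q_i there is a subset H ⊆ Q_i with |H| ≥ (|Q_i| - 1) / 2^(ℓ-1) such that H is homogeneous in G. -/
variable {V : Type*}

lemma auxHalve [Fintype V] (G : SimpleGraph V) (B : Finset V) (Q : Set V) :
    ∃ H : Set V, H ⊆ Q ∧
      (∀ b ∈ B, (∀ h ∈ H, G.Adj b h) ∨ (∀ h ∈ H, ¬ G.Adj b h)) ∧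
      Q.ncard ≤ 2 ^ B.card * H.ncard := by
  classical
  induction B using Finset.induction generalizing Q with
  | empty => exact ⟨Q, le_refl _, by simp, by simp⟩
  | @insert b B' hb ih =>
    set Q₁ : Set V := {q ∈ Q | G.Adj b q} with hQ₁
    set Q₂ : Set V := {q ∈ Q | ¬ G.Adj b q} with hQ₂
    have hunion : Q = Q₁ ∪ Q₂ := by
      ext q; by_cases h : G.Adj b q <;> simp [hQ₁, hQ₂, h]
    have hcard : Q.ncard ≤ Q₁.ncard + Q₂.ncard := by
      rw [hunion]; exact Set.ncard_union_le _ _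
    have key : ∀ Q' : Set V, Q' ⊆ Q → Q.ncard ≤ 2 * Q'.ncard →
        ((∀ q ∈ Q', G.Adj b q) ∨ (∀ q ∈ Q', ¬ G.Adj b q)) →
        ∃ H : Set V, H ⊆ Q ∧
          (∀ c ∈ insert b B', (∀ h ∈ H, G.Adj c h) ∨ (∀ h ∈ H, ¬ G.Adj c h)) ∧
          Q.ncard ≤ 2 ^ (insert b B').card * H.ncard := by
      intro Q' hsub hle hadj
      obtain ⟨H, hHQ', hHB, hHcard⟩ := ih Q'
      refine ⟨H, hHQ'.trans hsub, ?_, ?_⟩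
      · intro c hc
        rcases Finset.mem_insert.mp hc with rfl | hc
        · rcases hadj with h | h
          · exact Or.inl fun h' hh' => h h' (hHQ' hh')
          · exact Or.inr fun h' hh' => h h' (hHQ' hh')
        · exact hHB c hc
      · rw [Finset.card_insert_of_notMem hb, pow_succ, mul_comm (2 ^ B'.card) 2,
          mul_assoc]
        calc Q.ncard ≤ 2 * Q'.ncard := hle
          _ ≤ 2 * (2 ^ B'.card * H.ncard) := by omega
    rcases le_total Q₁.ncard Q₂.ncard with h | h
    · exact key Q₂ (fun q hq => hq.1) (by omega) (Or.inr fun q hq => hq.2)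
    · exact key Q₁ (fun q hq => hq.1) (by omega) (Or.inl fun q hq => hq.2)

/-- in a split graph partitioned into `ℓ` cliques by `f`, each part `Q_i`
contains a homogeneous set `H` with `|H| ≥ (|Q_i| - 1) / 2^(ℓ-1)`. -/
theorem stmt1 {V : Type*} [Fintype V] (G : SimpleGraph V) (hG : IsSplit G)
    (ℓ : ℕ) (f : V → Fin ℓ) (hf : ∀ i : Fin ℓ, G.IsClique (f ⁻¹' {i})) (i : Fin ℓ) :
    ∃ H : Set V, H ⊆ f ⁻¹' {i} ∧ IsHomog G H ∧
      (f ⁻¹' {i}).ncard - 1 ≤ 2 ^ (ℓ - 1) * H.ncard := by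
  classical
  obtain ⟨C, hC, hI⟩ := hG
  set B : Finset V := {v : V | v ∈ Cᶜ ∧ f v ≠ i}.toFinset with hB
  -- card bound on B
  have hBcard : B.card ≤ ℓ - 1 := by
    have hmaps : ∀ b ∈ B, f b ∈ (Finset.univ.erase i) := by
      intro b hb
      simp only [hB, Set.mem_toFinset, Set.mem_setOf_eq] at hb
      exact Finset.mem_erase.mpr ⟨hb.2, Finset.mem_univ _⟩
    have hinj : Set.InjOn f B := by
      intro u hu v hv huv
      by_contra hne
      simp only [Finset.mem_coe, hB, Set.mem_toFinset, Set.mem_setOf_eq] at hu hv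
      have hadj : G.Adj u v := (hf (f u)) (by simp) (by simp [huv]) hne
      exact hI hu.1 hv.1 hne hadj
    have := Finset.card_le_card_of_injOn f hmaps hinj
    simpa [Finset.card_erase_of_mem] using this
  set Q : Set V := (f ⁻¹' {i}) ∩ C with hQdef
  obtain ⟨H, hHQ, hHB, hHcard⟩ := auxHalve G B Q
  have hHC : H ⊆ C := fun h hh => (hHQ hh).2
  have hHi : H ⊆ f ⁻¹' {i} := fun h hh => (hHQ hh).1
  refine ⟨H, hHi, ?_, ?_⟩
  · -- homogeneous
    intro v hv
    by_cases hvC : v ∈ C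
    · left
      intro h hh
      exact hC hvC (hHC hh) (fun e => hv (e ▸ hh))
    · by_cases hvi : f v = i
      · left
        intro h hh
        refine (hf i) (by simp [hvi]) (hHi hh) ?_
        rintro rfl; exact hvC (hHC hh)
      · exact hHB v (by simp [hB, hvC, hvi])
  · -- cardinality
    have hfin : (f ⁻¹' {i}).Finite := Set.toFinite _
    have hsplit : f ⁻¹' {i} = Q ∪ ((f ⁻¹' {i}) ∩ Cᶜ) := by
      ext v; by_cases h : v ∈ C <;> simp [hQdef, h]
    have hsub : ((f ⁻¹' {i}) ∩ Cᶜ).ncard ≤ 1 := by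
      rw [Set.ncard_le_one_iff_eq]
      rcases Set.eq_empty_or_nonempty ((f ⁻¹' {i}) ∩ Cᶜ) with h | ⟨a, ha⟩
      · exact Or.inl h
      · right
        refine ⟨a, Set.eq_singleton_iff_unique_mem.mpr ⟨ha, fun b hb => ?_⟩⟩
        by_contra hne
        exact hI hb.2 ha.2 hne ((hf i) hb.1 ha.1 hne)
    have h1 : (f ⁻¹' {i}).ncard ≤ Q.ncard + 1 := by
      have h := Set.ncard_union_le Q ((f ⁻¹' {i}) ∩ Cᶜ)
      rw [← hsplit] at h
      omega
    have h2 : 2 ^ B.card * H.ncard ≤ 2 ^ (ℓ - 1) * H.ncard :=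
      Nat.mul_le_mul_right _ (Nat.pow_le_pow_right (by norm_num) hBcard)
    omega
end

section
/- Let G be a graph, and suppose G contains an independent homogeneous set H with |H| ≥ k + 2. Suppose further that for every vertex w ∈ H, the graph G - w admits a partition of its vertex set into at most k independent sets and at most ℓ ≤ k cliques such that vertices in the same independent part have identical constraints. If additionally whenever some vertex w' ∈ H \ {w} lies in an independent part P' of the partition of G - w, the vertex w can be added to P' to yield a valid partition of G, then G admits such a partition. Concretely: if H is an independent homogeneous set of size ≥ k+2 in G, ℓ ≤ k, and G - w admits a partition into k independent sets and ℓ cliques for some w ∈ H, then some two vertices of H lie in the same class type, forcing at least one vertex of H \ {w} into an independent part. -/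
variable {V : Type*}

/-- if `H` is an independent homogeneous set of size `≥ k+2` in `G`,
`ℓ ≤ k`, and for some `w ∈ H` the graph `G - w` has a partition into `k` independent
sets and `ℓ` cliques, then some vertex of `H \ {w}` lies in an independent part, and
`G` itself admits a partition into `k` independent sets and `ℓ` cliques. -/
theorem stmt3 {V : Type*} [Fintype V] (G : SimpleGraph V) (H : Set V) (k ℓ : ℕ)
    (hkl : ℓ ≤ k) (hind : IsIndep G H) (hhom : IsHomog G H) (hcard : k + 2 ≤ H.ncard)
    (w : V) (hw : w ∈ H)
    (f : ({w}ᶜ : Set V) → Fin (k + ℓ)) (hf : IsKLPartition (G.induce {w}ᶜ) k ℓ f) :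
    (∃ w' : ({w}ᶜ : Set V), (w' : V) ∈ H ∧ ((f w' : Fin (k + ℓ)) : ℕ) < k) ∧
      ∃ g : V → Fin (k + ℓ), IsKLPartition G k ℓ g := by
  classical
  -- Part 1: some vertex of H \ {w} is in an independent part
  have part1 : ∃ w' : ({w}ᶜ : Set V), (w' : V) ∈ H ∧ ((f w' : Fin (k + ℓ)) : ℕ) < k := by
    by_contra hcon
    push_neg at hcon
    set T : Set ({w}ᶜ : Set V) := {x | (x : V) ∈ H} with hT
    have hvalT : Subtype.val '' T = H \ {w} := by
      ext v
      constructor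
      · rintro ⟨x, hx, rfl⟩
        exact ⟨hx, x.2⟩
      · rintro ⟨hvH, hvw⟩
        exact ⟨⟨v, hvw⟩, hvH, rfl⟩
    have hTcard : T.ncard = (H \ {w}).ncard := by
      rw [← hvalT, Set.ncard_image_of_injective _ Subtype.val_injective]
    have hHfin : H.Finite := Set.toFinite H
    have hdiff : (H \ {w}).ncard = H.ncard - 1 := by
      rw [← Set.ncard_singleton w, ← Set.ncard_diff (Set.singleton_subset_iff.mpr hw)]
    have hTk : k + 1 ≤ T.ncard := by
      rw [hTcard, hdiff]; omega
    have hinj : Set.InjOn f T := by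
      intro x hx y hy hxy
      by_contra hne
      have hclique := hf (f x)
      rw [if_neg (by exact not_lt.mpr (hcon x hx))] at hclique
      have hadj : (G.induce ({w}ᶜ : Set V)).Adj x y := by
        apply hclique (by simp) (by simp [hxy]) hne
      have : G.Adj (x : V) (y : V) := hadj
      exact hind hx hy (fun h => hne (Subtype.ext h)) this
    have himg : f '' T ⊆ {i : Fin (k + ℓ) | ¬ (i : ℕ) < k} := by
      rintro i ⟨x, hx, rfl⟩
      exact not_lt.mpr (hcon x hx)
    have hScard : ({i : Fin (k + ℓ) | ¬ (i : ℕ) < k}).ncard = ℓ := by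
      have e : {i : Fin (k + ℓ) // ¬ (i : ℕ) < k} ≃ Fin ℓ := {
        toFun := fun x => ⟨(x.1 : ℕ) - k, by
          have h1 := x.1.isLt
          have h2 : ¬ (x.1 : ℕ) < k := x.2
          omega⟩
        invFun := fun j => ⟨⟨k + j, by have := j.isLt; omega⟩, by simp⟩
        left_inv := fun x => by
          have h2 : ¬ (x.1 : ℕ) < k := x.2
          ext
          simp
          omega
        right_inv := fun j => by
          ext
          simp }
      rw [← Nat.card_coe_set_eq]
      exact Nat.card_eq_of_equiv_fin e
    have h1 : T.ncard = (f '' T).ncard := (Set.ncard_image_of_injOn hinj).symm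
    have h2 := Set.ncard_le_ncard himg (Set.toFinite _)
    rw [hScard] at h2
    omega
  refine ⟨part1, ?_⟩
  obtain ⟨w', hw'H, hw'lt⟩ := part1
  have hw'ne : (w' : V) ≠ w := w'.2
  -- helper: w is nonadjacent to every vertex in the part of w'
  have key : ∀ (v : V) (h : v ≠ w),
      f ⟨v, Set.mem_compl_singleton_iff.mpr h⟩ = f w' → ¬ G.Adj w v := by
    intro v hvw hfv
    by_cases hvH : v ∈ H
    · exact hind hw hvH (fun h => hvw h.symm)
    · have hvw' : v ≠ (w' : V) := fun h => hvH (h ▸ hw'H)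
      rcases hhom v hvH with hall | hnone
      · exfalso
        have hpart := hf (f w')
        rw [if_pos hw'lt] at hpart
        have : ¬ (G.induce ({w}ᶜ : Set V)).Adj ⟨v, Set.mem_compl_singleton_iff.mpr hvw⟩ w' :=
          hpart (by simp [hfv]) (by simp) (fun h => hvw' (congrArg Subtype.val h))
        exact this (hall _ hw'H)
      · exact fun h => hnone w hw h.symm
  refine ⟨fun v => if h : v = w then f w' else f ⟨v, Set.mem_compl_singleton_iff.mpr h⟩, ?_⟩
  intro i
  by_cases hik : (i : ℕ) < k
  · rw [if_pos hik]
    intro u hu v hv huv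
    simp only [Set.mem_preimage, Set.mem_singleton_iff] at hu hv
    by_cases huw : u = w
    · subst huw
      rw [dif_pos rfl] at hu
      have hvw : v ≠ u := fun h => huv h.symm
      rw [dif_neg hvw] at hv
      exact key v hvw (hv.trans hu.symm)
    · rw [dif_neg huw] at hu
      by_cases hvw : v = w
      · subst hvw
        rw [dif_pos rfl] at hv
        exact fun h => key u huw (hu.trans hv.symm) h.symm
      · rw [dif_neg hvw] at hv
        have hpart := hf i
        rw [if_pos hik] at hpart
        have : ¬ (G.induce ({w}ᶜ : Set V)).Adj ⟨u, Set.mem_compl_singleton_iff.mpr huw⟩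
            ⟨v, Set.mem_compl_singleton_iff.mpr hvw⟩ :=
          hpart (by simp [hu]) (by simp [hv]) (fun h => huv (congrArg Subtype.val h))
        exact this
  · rw [if_neg hik]
    intro u hu v hv huv
    simp only [Set.mem_preimage, Set.mem_singleton_iff] at hu hv
    have huw : u ≠ w := by
      rintro rfl
      rw [dif_pos rfl] at hu
      exact hik (hu ▸ hw'lt)
    have hvw : v ≠ w := by
      rintro rfl
      rw [dif_pos rfl] at hv
      exact hik (hv ▸ hw'lt)
    rw [dif_neg huw] at hu
    rw [dif_neg hvw] at hv
    have hpart := hf i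
    rw [if_neg hik] at hpart
    have : (G.induce ({w}ᶜ : Set V)).Adj ⟨u, Set.mem_compl_singleton_iff.mpr huw⟩
        ⟨v, Set.mem_compl_singleton_iff.mpr hvw⟩ :=
      hpart (by simp [hu]) (by simp [hv]) (fun h => huv (congrArg Subtype.val h))
    exact this
end

section
/- Every split minimal M-obstruction, for M an m×m matrix over {0,1} (no asterisks) with k diagonal zeros and ℓ ≤ k diagonal ones (k+ℓ = m), has at most 2^(k-1)·(k+ℓ)·(2k+3) + 1 vertices. -/
variable {V : Type*}

section Aux

variable {m : ℕ} {M : Matrix (Fin m) (Fin m) (Option Bool)}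

lemma myTwoValued (hnoast : ∀ i j, M i j ≠ none) (i j : Fin m) :
    M i j = some true ∨ M i j = some false := by
  cases h : M i j with
  | none => exact absurd h (hnoast i j)
  | some b => cases b with
    | false => right; rfl
    | true => left; rfl

lemma myAdjIff {W : Type*} {H : SimpleGraph W} {g : W → Fin m}
    (hnoast : ∀ i j, M i j ≠ none) (hg : IsMPartition M H g)
    {u w : W} (huw : u ≠ w) : H.Adj u w ↔ M (g u) (g w) = some true := by
  constructor
  · intro ha
    rcases myTwoValued hnoast (g u) (g w) with h | h
    · exact h
    · exact absurd ha ((hg u w huw).2 h)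
  · exact (hg u w huw).1

lemma myInduceAdj (G : SimpleGraph V) (s : Set V) (a b : ↥s) :
    (G.induce s).Adj a b ↔ G.Adj ↑a ↑b := Iff.rfl

end Aux

lemma extend_twins {m : ℕ} {M : Matrix (Fin m) (Fin m) (Option Bool)}
    (hsym : M.IsSymm) (hnoast : ∀ i j, M i j ≠ none)
    (G : SimpleGraph V)
    (hdel : ∀ v : V, HasMPartition M (G.induce {v}ᶜ))
    (c : Bool) (T : Finset V)
    (hTadj : ∀ a ∈ T, ∀ b ∈ T, a ≠ b → (G.Adj a b ↔ c = true))
    (hTtwin : ∀ a ∈ T, ∀ b ∈ T, ∀ w : V, w ≠ a → w ≠ b → (G.Adj a w ↔ G.Adj b w))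
    (hcard : (Finset.univ.filter fun i : Fin m => M i i = some (!c)).card + 2 ≤ T.card) :
    HasMPartition M G := by
  classical
  obtain ⟨b, hb⟩ : ∃ b, b ∈ T := Finset.card_pos.mp (by omega)
  obtain ⟨g, hg⟩ := hdel b
  set S := T.erase b with hS
  have hScard : (Finset.univ.filter fun i : Fin m => M i i = some (!c)).card + 1 ≤ S.card := by
    rw [hS, Finset.card_erase_of_mem hb]; omega
  obtain ⟨t₁, ht₁⟩ : S.Nonempty := Finset.card_pos.mp (by omega)
  have hmem : ∀ {w : V}, w ≠ b → w ∈ ({b}ᶜ : Set V) :=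
    fun h => Set.mem_compl_singleton_iff.mpr h
  have hi₀ : Nonempty (Fin m) := ⟨g ⟨t₁, hmem (Finset.ne_of_mem_erase ht₁)⟩⟩
  obtain ⟨i₀⟩ := hi₀
  set gg : V → Fin m := fun w => if h : w = b then i₀ else g ⟨w, hmem h⟩ with hgg
  have hgu : ∀ (w : V) (h : w ≠ b), g ⟨w, hmem h⟩ = gg w := by
    intro w h
    simp only [hgg, dif_neg h]
  -- find t₀ ∈ S whose part has diagonal `some c`
  have key : ∃ t₀ ∈ S, M (gg t₀) (gg t₀) = some c := by
    by_contra hcon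
    push_neg at hcon
    have hmaps : ∀ t ∈ S, gg t ∈ Finset.univ.filter fun i : Fin m => M i i = some (!c) := by
      intro t ht
      simp only [Finset.mem_filter, Finset.mem_univ, true_and]
      rcases myTwoValued hnoast (gg t) (gg t) with h | h
      · cases c
        · exact h
        · exact absurd h (hcon t ht)
      · cases c
        · exact absurd h (hcon t ht)
        · exact h
    obtain ⟨x, hx, y, hy, hxy, hgxy⟩ :=
      Finset.exists_ne_map_eq_of_card_lt_of_maps_to (by omega) hmaps
    have hxb : x ≠ b := Finset.ne_of_mem_erase hx
    have hyb : y ≠ b := Finset.ne_of_mem_erase hy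
    set x' : ↥({b}ᶜ : Set V) := ⟨x, hmem hxb⟩ with hx'
    set y' : ↥({b}ᶜ : Set V) := ⟨y, hmem hyb⟩ with hy'
    have hx'y' : x' ≠ y' := fun h => hxy (congrArg Subtype.val h)
    have hadj := myAdjIff hnoast hg hx'y'
    rw [myInduceAdj] at hadj
    have hgx : g x' = gg x := hgu x hxb
    have hgy : g y' = gg y := hgu y hyb
    have hadjT := hTadj x (Finset.mem_of_mem_erase hx) y (Finset.mem_of_mem_erase hy) hxy
    have hMdiag : M (gg x) (gg x) = some c := by
      rcases myTwoValued hnoast (gg x) (gg x) with h | h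
      · have : G.Adj x y := hadj.mpr (by rw [hgx, hgy, ← hgxy]; exact h)
        have hc : c = true := hadjT.mp this
        rw [h, hc]
      · have : ¬ G.Adj x y := by
          intro ha
          have := hadj.mp ha
          rw [hgx, hgy, ← hgxy, h] at this
          simp at this
        have hc : c = false := by
          cases c
          · rfl
          · exact absurd (hadjT.mpr rfl) this
        rw [h, hc]
    exact hcon x hx hMdiag
  obtain ⟨t₀, ht₀S, hdiag⟩ := key
  have ht₀b : t₀ ≠ b := Finset.ne_of_mem_erase ht₀S
  have ht₀T : t₀ ∈ T := Finset.mem_of_mem_erase ht₀S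
  set j := gg t₀ with hj
  set F : V → Fin m := fun w => if w = b then j else gg w with hF
  -- main half: constraints between b and any other vertex
  have claim : ∀ w : V, w ≠ b →
      (M j (gg w) = some true → G.Adj b w) ∧ (M j (gg w) = some false → ¬ G.Adj b w) := by
    intro w hw
    by_cases hwt : w = t₀
    · subst hwt
      constructor
      · intro h
        rw [hdiag] at h
        have hc : c = true := by injection h
        exact (hTadj b hb w ht₀T (Ne.symm hw)).mpr hc
      · intro h hadj
        rw [hdiag] at h
        have hc : c = false := by injection h
        have := (hTadj b hb w ht₀T (Ne.symm hw)).mp hadj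
        rw [hc] at this; exact Bool.false_ne_true this
    · have ht₀' : (⟨t₀, hmem ht₀b⟩ : ↥({b}ᶜ : Set V)) ≠ ⟨w, hmem hw⟩ := by
        intro h
        exact hwt (congrArg Subtype.val h).symm
      have hadj := myAdjIff hnoast hg ht₀'
      rw [myInduceAdj, hgu t₀ ht₀b, hgu w hw, ← hj] at hadj
      have htw := hTtwin t₀ ht₀T b hb w hwt hw
      constructor
      · intro h
        exact (htw.mp (hadj.mpr h))
      · intro h ha
        have := hadj.mp (htw.mpr ha)
        rw [h] at this; simp at this
  refine ⟨F, ?_⟩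
  intro u w huw
  by_cases hu : u = b <;> by_cases hwb : w = b
  · exact absurd (hu.trans hwb.symm) huw
  · have hFu : F u = j := by simp only [hF]; rw [if_pos hu]
    have hFw : F w = gg w := by simp only [hF]; rw [if_neg hwb]
    rw [hFu, hFw, hu]
    exact claim w hwb
  · have hFw : F w = j := by simp only [hF]; rw [if_pos hwb]
    have hFu : F u = gg u := by simp only [hF]; rw [if_neg hu]
    have hs : M (gg u) j = M j (gg u) := hsym.apply _ _
    rw [hFu, hFw, hwb, hs]
    constructor
    · intro h
      exact ((claim u hu).1 h).symm
    · intro h ha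
      exact (claim u hu).2 h ha.symm
  · have hFu : F u = gg u := by simp only [hF]; rw [if_neg hu]
    have hFw : F w = gg w := by simp only [hF]; rw [if_neg hwb]
    rw [hFu, hFw]
    have hu' : (⟨u, hmem hu⟩ : ↥({b}ᶜ : Set V)) ≠ ⟨w, hmem hwb⟩ := by
      intro h; exact huw (congrArg Subtype.val h)
    have hthis := hg ⟨u, hmem hu⟩ ⟨w, hmem hwb⟩ hu'
    rw [hgu u hu, hgu w hwb] at hthis
    exact hthis

/-- for an `m×m` symmetric matrix `M` over `{0,1}` (no asterisks) with
`k` diagonal zeros and `ℓ ≤ k` diagonal ones (`k + ℓ = m`), every split minimal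
`M`-obstruction has at most `2^(k-1)·(k+ℓ)·(2k+3) + 1` vertices. -/
theorem stmt6 {m : ℕ} (M : Matrix (Fin m) (Fin m) (Option Bool)) (hsym : M.IsSymm)
    (hnoast : ∀ i j, M i j ≠ none) (k ℓ : ℕ)
    (hk : k = (Finset.univ.filter fun i : Fin m => M i i = some false).card)
    (hl : ℓ = (Finset.univ.filter fun i : Fin m => M i i = some true).card)
    (hkl : ℓ ≤ k) (hm : k + ℓ = m)
    {V : Type*} [Fintype V] (G : SimpleGraph V)
    (hsplit : IsSplit G) (hobs : IsMinimalMObstruction M G) :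
    Fintype.card V ≤ 2 ^ (k - 1) * (k + ℓ) * (2 * k + 3) + 1 := by
  classical
  obtain ⟨hnopart, hdel⟩ := hobs
  -- arithmetic comparison of the two bounds
  have harith : 4 * k * ℓ + 2 * (k + ℓ) + 1 ≤ 2 ^ (k - 1) * (k + ℓ) * (2 * k + 3) + 1 := by
    rcases Nat.eq_zero_or_pos k with h0 | h1
    · have : ℓ = 0 := by omega
      subst h0 this; simp
    · have hp : 1 ≤ 2 ^ (k - 1) := Nat.one_le_two_pow
      have h2 : (k + ℓ) * (2 * k + 3) ≤ 2 ^ (k - 1) * ((k + ℓ) * (2 * k + 3)) :=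
        Nat.le_mul_of_pos_left _ (by omega)
      nlinarith [hkl, h2]
  refine le_trans ?_ harith
  -- now show card V ≤ 4kℓ + 2(k+ℓ) + 1
  rcases isEmpty_or_nonempty V with hV | hV
  · rw [Fintype.card_eq_zero]; exact Nat.zero_le _
  obtain ⟨v⟩ := hV
  obtain ⟨f, hf⟩ := hdel v
  have hmem : ∀ {w : V}, w ≠ v → w ∈ ({v}ᶜ : Set V) :=
    fun h => Set.mem_compl_singleton_iff.mpr h
  rcases Nat.eq_zero_or_pos m with hm0 | hmpos
  · subst hm0
    have hall : ∀ w : V, w = v := by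
      intro w; by_contra hw
      exact (f ⟨w, hmem hw⟩).elim0
    have h1 : Fintype.card V ≤ 1 :=
      Fintype.card_le_one_iff.mpr fun a b => (hall a).trans (hall b).symm
    omega
  set i₀ : Fin m := ⟨0, hmpos⟩ with hi₀
  set f' : V → Fin m := fun w => if h : w = v then i₀ else f ⟨w, hmem h⟩ with hf'
  have hfu : ∀ (w : V) (h : w ≠ v), f ⟨w, hmem h⟩ = f' w := by
    intro w h; simp only [hf', dif_neg h]
  set T : Fin m → Bool → Finset V := fun i b =>
    Finset.univ.filter fun w => w ≠ v ∧ f' w = i ∧ (G.Adj v w ↔ b = true) with hT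
  have hTmem : ∀ {i b w}, w ∈ T i b ↔ (w ≠ v ∧ f' w = i ∧ (G.Adj v w ↔ b = true)) := by
    intro i b w
    simp only [hT, Finset.mem_filter, Finset.mem_univ, true_and]
  -- bound each T i b
  have hTle : ∀ (i : Fin m) (c b : Bool), M i i = some c →
      (T i b).card ≤ (Finset.univ.filter fun j : Fin m => M j j = some (!c)).card + 1 := by
    intro i c b hMii
    by_contra hcon
    push_neg at hcon
    apply hnopart
    refine extend_twins hsym hnoast G hdel c (T i b) ?_ ?_ (by omega)
    · intro a ha a₂ ha₂ hne
      obtain ⟨hav, hfa, -⟩ := hTmem.mp ha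
      obtain ⟨ha₂v, hfa₂, -⟩ := hTmem.mp ha₂
      have hne' : (⟨a, hmem hav⟩ : ↥({v}ᶜ : Set V)) ≠ ⟨a₂, hmem ha₂v⟩ := by
        intro h; exact hne (congrArg Subtype.val h)
      have hadj := myAdjIff hnoast hf hne'
      rw [myInduceAdj, hfu a hav, hfu a₂ ha₂v, hfa, hfa₂, hMii] at hadj
      rw [hadj]
      cases c
      · simp
      · simp
    · intro a ha a₂ ha₂ w hwa hwa₂
      obtain ⟨hav, hfa, hAa⟩ := hTmem.mp ha
      obtain ⟨ha₂v, hfa₂, hAa₂⟩ := hTmem.mp ha₂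
      by_cases hwv : w = v
      · subst hwv
        rw [G.adj_comm a w, G.adj_comm a₂ w]
        rw [hAa, hAa₂]
      · have h1 : (⟨a, hmem hav⟩ : ↥({v}ᶜ : Set V)) ≠ ⟨w, hmem hwv⟩ := by
          intro h; exact hwa (congrArg Subtype.val h).symm
        have h2 : (⟨a₂, hmem ha₂v⟩ : ↥({v}ᶜ : Set V)) ≠ ⟨w, hmem hwv⟩ := by
          intro h; exact hwa₂ (congrArg Subtype.val h).symm
        have e1 := myAdjIff hnoast hf h1
        have e2 := myAdjIff hnoast hf h2
        rw [myInduceAdj, hfu a hav, hfu w hwv, hfa] at e1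
        rw [myInduceAdj, hfu a₂ ha₂v, hfu w hwv, hfa₂] at e2
        rw [e1, e2]
  -- covering
  have hcover : Finset.univ.erase v ⊆
      Finset.univ.biUnion (fun i : Fin m => T i true ∪ T i false) := by
    intro w hw
    have hwv : w ≠ v := Finset.ne_of_mem_erase hw
    rw [Finset.mem_biUnion]
    refine ⟨f' w, Finset.mem_univ _, ?_⟩
    rw [Finset.mem_union]
    by_cases hA : G.Adj v w
    · exact Or.inl (hTmem.mpr ⟨hwv, rfl, by simp [hA]⟩)
    · exact Or.inr (hTmem.mpr ⟨hwv, rfl, by simp [hA]⟩)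
  -- per-index bound
  have hper : ∀ i : Fin m,
      (T i true).card + (T i false).card ≤
        2 * (if M i i = some false then ℓ else k) + 2 := by
    intro i
    rcases myTwoValued hnoast i i with h | h
    · have hb1 := hTle i true true h
      have hb2 := hTle i true false h
      simp only [Bool.not_true] at hb1 hb2
      rw [← hk] at hb1 hb2
      rw [if_neg (by rw [h]; simp)]
      omega
    · have hb1 := hTle i false true h
      have hb2 := hTle i false false h
      simp only [Bool.not_false] at hb1 hb2
      rw [← hl] at hb1 hb2
      rw [if_pos h]
      omega
  -- sum it up
  have hsum : (Finset.univ.erase v).card ≤ 4 * k * ℓ + 2 * (k + ℓ) := by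
    calc (Finset.univ.erase v).card
        ≤ (Finset.univ.biUnion (fun i : Fin m => T i true ∪ T i false)).card :=
          Finset.card_le_card hcover
      _ ≤ ∑ i : Fin m, (T i true ∪ T i false).card := Finset.card_biUnion_le
      _ ≤ ∑ i : Fin m, ((T i true).card + (T i false).card) :=
          Finset.sum_le_sum fun i _ => Finset.card_union_le _ _
      _ ≤ ∑ i : Fin m, (2 * (if M i i = some false then ℓ else k) + 2) :=
          Finset.sum_le_sum fun i _ => hper i
      _ = 2 * (∑ i : Fin m, (if M i i = some false then ℓ else k)) + 2 * m := by
          rw [Finset.sum_add_distrib, Finset.mul_sum]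
          simp [Finset.card_univ, Nat.mul_comm]
      _ = 4 * k * ℓ + 2 * (k + ℓ) := by
          have hsplitsum : (∑ i : Fin m, (if M i i = some false then ℓ else k))
              = k * ℓ + ℓ * k := by
            rw [Finset.sum_ite]
            have hfilt : Finset.univ.filter (fun i : Fin m => ¬ M i i = some false)
                = Finset.univ.filter (fun i : Fin m => M i i = some true) := by
              ext i
              simp only [Finset.mem_filter, Finset.mem_univ, true_and]
              constructor
              · intro hni
                rcases myTwoValued hnoast i i with h | h
                · exact h
                · exact absurd h hni
              · intro h hni
                rw [h] at hni
                simp at hni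
            rw [hfilt]
            simp [Finset.sum_const, ← hk, ← hl, Nat.smul_one_eq_cast]
          rw [hsplitsum, ← hm]
          ring
  have hcv : Fintype.card V = (Finset.univ.erase v).card + 1 := by
    rw [Finset.card_erase_of_mem (Finset.mem_univ v), Finset.card_univ]
    have : 1 ≤ Fintype.card V := Fintype.card_pos_iff.mpr ⟨v⟩
    omega
  omega
end

section
/- For every m×m matrix M over {0,1,*} with no diagonal asterisks, the class of split graphs that are minimal M-obstructions is finite (up to isomorphism). -/
variable {V : Type*}

open Finset

lemma twin_bound {V : Type} [Fintype V] {m : ℕ} {M : Matrix (Fin m) (Fin m) (Option Bool)}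
    (hsym : M.IsSymm) (hdiag : ∀ i, M i i ≠ none) {G : SimpleGraph V}
    (hobs : IsMinimalMObstruction M G) (T : Finset V) (b : Bool)
    (hT : ∀ x ∈ T, ∀ y ∈ T, x ≠ y →
      (G.Adj x y ↔ b = true) ∧ ∀ z, z ≠ x → z ≠ y → (G.Adj x z ↔ G.Adj y z)) :
    T.card ≤ m + 1 := by
  classical
  by_contra hcard
  push_neg at hcard
  obtain ⟨u0, hu0⟩ : T.Nonempty := card_pos.mp (by omega)
  obtain ⟨f, hf⟩ := hobs.2 u0
  have hmem : ∀ x : V, x ≠ u0 → x ∈ ({u0}ᶜ : Set V) := by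
    intro x hx; simp [hx]
  set F : V → Option (Fin m) := fun x =>
    if h : x = u0 then none else some (f ⟨x, hmem x h⟩) with hF
  have hFsome : ∀ x (h : x ≠ u0), F x = some (f ⟨x, hmem x h⟩) := by
    intro x h; simp [hF, h]
  -- pigeonhole on T.erase u0
  have hpig : ∃ x ∈ T.erase u0, ∃ y ∈ T.erase u0, x ≠ y ∧ F x = F y := by
    apply exists_ne_map_eq_of_card_lt_of_maps_to (t := (univ : Finset (Fin m)).image some)
    · calc #((univ : Finset (Fin m)).image some) ≤ #(univ : Finset (Fin m)) := card_image_le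
        _ = m := by simp
        _ < #(T.erase u0) := by rw [card_erase_of_mem hu0]; omega
    · intro a ha
      have h1 : a ≠ u0 := ne_of_mem_erase ha
      rw [hFsome a h1]
      exact mem_image_of_mem some (mem_univ _)
  obtain ⟨u1, hu1, u2, hu2, h12, hF12⟩ := hpig
  have hu1n : u1 ≠ u0 := ne_of_mem_erase hu1
  have hu2n : u2 ≠ u0 := ne_of_mem_erase hu2
  have hu1T : u1 ∈ T := mem_of_mem_erase hu1
  have hu2T : u2 ∈ T := mem_of_mem_erase hu2
  set p : Fin m := f ⟨u1, hmem u1 hu1n⟩ with hp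
  have hFp : ∀ x (h : x ≠ u0), F x = some p ↔ f ⟨x, hmem x h⟩ = p := by
    intro x h; rw [hFsome x h]; simp
  have hfu2 : f ⟨u2, hmem u2 hu2n⟩ = p := by
    have := hF12; rw [hFsome u1 hu1n, hFsome u2 hu2n] at this
    exact (Option.some_injective _ this).symm
  -- the adjacency in induced graph
  have hind : ∀ (a b : ({u0}ᶜ : Set V)), (G.induce {u0}ᶜ).Adj a b ↔ G.Adj a b := by
    intro a b; simp [SimpleGraph.comap_adj]
  -- M p p = some b
  have hpp : M p p = some b := by
    rcases Option.ne_none_iff_exists'.mp (hdiag p) with ⟨c, hc⟩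
    have hadj12 := (hT u1 hu1T u2 hu2T h12).1
    have hfc := hf ⟨u1, hmem u1 hu1n⟩ ⟨u2, hmem u2 hu2n⟩
      (fun h => h12 (congrArg Subtype.val h))
    rw [← hp, hfu2] at hfc
    cases b with
    | true =>
      cases c with
      | true => exact hc
      | false =>
        exfalso
        have h2 := hfc.2 hc
        rw [hind] at h2
        exact h2 (hadj12.mpr rfl)
    | false =>
      cases c with
      | false => exact hc
      | true =>
        exfalso
        have h2 := hfc.1 hc
        rw [hind] at h2
        simp only [Bool.false_eq_true, iff_false] at hadj12
        exact hadj12 h2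
  -- extension
  set g : V → Fin m := fun x => if h : x = u0 then p else f ⟨x, hmem x h⟩ with hg
  have hgu0 : g u0 = p := by simp [hg]
  have hgx : ∀ x (h : x ≠ u0), g x = f ⟨x, hmem x h⟩ := by intro x h; simp [hg, h]
  -- key: constraints between u0 and any y ≠ u0
  have key : ∀ y, y ≠ u0 →
      (M p (g y) = some true → G.Adj u0 y) ∧ (M p (g y) = some false → ¬ G.Adj u0 y) := by
    intro y hy
    by_cases hyu1 : y = u1
    · subst hyu1
      rw [hgx y hy, ← hp, hp]
      have hadj := (hT u0 hu0 y hu1T (fun h => hy h.symm)).1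
      constructor
      · intro h; rw [hpp] at h
        cases b with
        | true => exact hadj.mpr rfl
        | false => simp at h
      · intro h; rw [hpp] at h
        cases b with
        | true => simp at h
        | false => intro ha; simpa using hadj.mp ha
    · -- use twin property of u0, u1 at z = y, and f's constraint on (u1, y)
      have htw := (hT u0 hu0 u1 hu1T (fun h => hu1n h.symm)).2 y hy hyu1
      have hfc := hf ⟨u1, hmem u1 hu1n⟩ ⟨y, hmem y hy⟩
        (fun h => hyu1 (congrArg Subtype.val h).symm)
      rw [hgx y hy]
      constructor
      · intro h
        have := hfc.1 (by rw [hp] at h; exact h)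
        rw [hind] at this
        exact htw.mpr this
      · intro h ha
        have := hfc.2 (by rw [hp] at h; exact h)
        rw [hind] at this
        exact this (htw.mp ha)
  apply hobs.1
  refine ⟨g, ?_⟩
  intro x y hxy
  by_cases hx : x = u0
  · subst hx
    rw [hgu0]
    exact key y (Ne.symm hxy)
  · by_cases hy : y = u0
    · subst hy
      rw [hgu0]
      have hk := key x hx
      rw [hsym.apply p (g x)]
      exact ⟨fun h => (hk.1 h).symm, fun h ha => hk.2 h ha.symm⟩
    · have hfc := hf ⟨x, hmem x hx⟩ ⟨y, hmem y hy⟩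
        (fun h => hxy (congrArg Subtype.val h))
      rw [hgx x hx, hgx y hy]
      exact ⟨fun h => (hind _ _).mp (hfc.1 h), fun h ha => hfc.2 h ((hind _ _).mpr ha)⟩

/-- for every `m×m` symmetric matrix `M` over `{0,1,*}` with no diagonal
asterisks, there are only finitely many split minimal `M`-obstructions (up to
isomorphism), i.e. their number of vertices is bounded. -/
theorem stmt7 {m : ℕ} (M : Matrix (Fin m) (Fin m) (Option Bool)) (hsym : M.IsSymm)
    (hdiag : ∀ i, M i i ≠ none) :
    ∃ N : ℕ, ∀ (V : Type) [Fintype V] (G : SimpleGraph V),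
      IsSplit G → IsMinimalMObstruction M G → Fintype.card V ≤ N := by
  classical
  have hdiag' : ∀ p : Fin m, M p p = some true ∨ M p p = some false := by
    intro p
    rcases Option.ne_none_iff_exists'.mp (hdiag p) with ⟨c, hc⟩
    cases c
    · exact Or.inr hc
    · exact Or.inl hc
  by_cases hstar : ∀ i j, M i i = some false → M j j = some true → M i j ≠ none
  swap
  · -- easy case: a star between a 0-part and a 1-part, every split graph is partitionable
    push_neg at hstar
    obtain ⟨i, j, hi, hj, hij⟩ := hstar
    refine ⟨0, ?_⟩
    intro V _ G hsplit hobs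
    exfalso
    obtain ⟨C, hC, hI⟩ := hsplit
    apply hobs.1
    refine ⟨fun x => if x ∈ C then j else i, ?_⟩
    intro u v huv
    by_cases hu : u ∈ C <;> by_cases hv : v ∈ C <;> simp only [hu, hv, if_true, if_false]
    · rw [hj]
      exact ⟨fun _ => hC hu hv huv, fun h => by simp at h⟩
    · rw [hsym.apply i j, hij]
      exact ⟨fun h => by simp at h, fun h => by simp at h⟩
    · rw [hij]
      exact ⟨fun h => by simp at h, fun h => by simp at h⟩
    · rw [hi]
      exact ⟨fun h => by simp at h, fun _ => hI hu hv huv⟩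
  -- hard case
  refine ⟨(3 * m + 3) * ((m + 1) * 2 ^ (2 * m + 2)), ?_⟩
  intro V _ G hsplit hobs
  classical
  obtain ⟨C, hC, hI⟩ := hsplit
  rcases isEmpty_or_nonempty V with hV | hV
  · simp [Fintype.card_eq_zero]
  obtain ⟨v₀⟩ := hV
  obtain ⟨f, hf⟩ := hobs.2 v₀
  have hmem : ∀ x : V, x ≠ v₀ → x ∈ ({v₀}ᶜ : Set V) := by intro x hx; simp [hx]
  set F : V → Option (Fin m) := fun x =>
    if h : x = v₀ then none else some (f ⟨x, hmem x h⟩) with hF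
  have hFsome : ∀ x (h : x ≠ v₀), F x = some (f ⟨x, hmem x h⟩) := by
    intro x h; simp [hF, h]
  have hFnone : ∀ x, F x = none → x = v₀ := by
    intro x hx
    by_contra h
    rw [hFsome x h] at hx
    simp at hx
  have hind : ∀ (a b : ({v₀}ᶜ : Set V)), (G.induce {v₀}ᶜ).Adj a b ↔ G.Adj a b := by
    intro a b; simp [SimpleGraph.comap_adj]
  -- the f-constraints transported to V
  have hfadj : ∀ x y (hx : x ≠ v₀) (hy : y ≠ v₀), x ≠ y → ∀ p q, F x = some p → F y = some q →
      (M p q = some true → G.Adj x y) ∧ (M p q = some false → ¬ G.Adj x y) := by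
    intro x y hx hy hxy p q hp hq
    rw [hFsome x hx] at hp
    rw [hFsome y hy] at hq
    have hfc := hf ⟨x, hmem x hx⟩ ⟨y, hmem y hy⟩ (fun h => hxy (congrArg Subtype.val h))
    rw [Option.some_inj.mp hp, Option.some_inj.mp hq] at hfc
    exact ⟨fun h => (hind _ _).mp (hfc.1 h), fun h ha => hfc.2 h ((hind _ _).mpr ha)⟩
  set Good : V → Prop := fun x =>
    (x ∈ C ∧ ∃ p, F x = some p ∧ M p p = some true) ∨
    (x ∉ C ∧ ∃ p, F x = some p ∧ M p p = some false) with hGood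
  set E : Finset V := univ.filter (fun x => ¬ Good x) with hE
  have hnotE : ∀ x, x ∉ E → Good x := by
    intro x hx
    by_contra h
    exact hx (mem_filter.mpr ⟨mem_univ x, h⟩)
  have hne0 : ∀ x, x ∉ E → x ≠ v₀ := by
    intro x hx
    rcases hnotE x hx with ⟨_, p, hp, _⟩ | ⟨_, p, hp, _⟩ <;>
      · intro h; subst h; simp [hF] at hp
  have hsome_ne : ∀ x p, F x = some p → x ≠ v₀ := by
    intro x p hp h; subst h; simp [hF] at hp
  -- injectivity of F on each side of E
  have hEinj : ∀ (b : Bool) (x y : V), x ∈ E → y ∈ E → (x ∈ C ↔ b = true) →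
      (y ∈ C ↔ b = true) → F x = F y → x = y := by
    intro b x y hxE hyE hxC hyC hxy
    by_contra hne
    cases hFx : F x with
    | none => exact hne ((hFnone x hFx).trans (hFnone y (hxy ▸ hFx)).symm)
    | some p =>
      have hFy : F y = some p := hxy ▸ hFx
      have hx0 : x ≠ v₀ := hsome_ne x p hFx
      have hy0 : y ≠ v₀ := hsome_ne y p hFy
      have hGx : ¬ Good x := (mem_filter.mp hxE).2
      simp only [hGood] at hGx
      push_neg at hGx
      cases b with
      | true =>
        have hxC' : x ∈ C := hxC.mpr rfl
        have hyC' : y ∈ C := hyC.mpr rfl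
        have hpp : M p p = some false := by
          rcases hdiag' p with h | h
          · exact absurd h (hGx.1 hxC' p hFx)
          · exact h
        exact (hfadj x y hx0 hy0 hne p p hFx hFy).2 hpp (hC hxC' hyC' hne)
      | false =>
        have hxC' : x ∉ C := fun h => by simpa using hxC.mp h
        have hyC' : y ∉ C := fun h => by simpa using hyC.mp h
        have hpp : M p p = some true := by
          rcases hdiag' p with h | h
          · exact h
          · exact absurd h (hGx.2 hxC' p hFx)
        exact hI hxC' hyC' hne ((hfadj x y hx0 hy0 hne p p hFx hFy).1 hpp)
  -- bound on E
  have hEcard : E.card ≤ 2 * m + 2 := by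
    have hsplitE := card_filter_add_card_filter_not (s := E) (p := fun x => x ∈ C)
    have h1 : #(E.filter (fun x => x ∈ C)) ≤ m + 1 := by
      have := card_le_card_of_injOn (s := E.filter (fun x => x ∈ C))
        (t := (univ : Finset (Option (Fin m)))) F (fun a _ => mem_univ (F a)) ?_
      · simpa using this
      · intro x hx y hy hxy
        simp only [coe_filter, Set.mem_setOf_eq] at hx hy
        exact hEinj true x y hx.1 hy.1 (by simp [hx.2]) (by simp [hy.2]) hxy
    have h2 : #(E.filter (fun x => ¬ x ∈ C)) ≤ m + 1 := by
      have := card_le_card_of_injOn (s := E.filter (fun x => ¬ x ∈ C))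
        (t := (univ : Finset (Option (Fin m)))) F (fun a _ => mem_univ (F a)) ?_
      · simpa using this
      · intro x hx y hy hxy
        simp only [coe_filter, Set.mem_setOf_eq] at hx hy
        exact hEinj false x y hx.1 hy.1 (by simp [hx.2]) (by simp [hy.2]) hxy
    omega
  -- the side of a vertex outside E is determined by its part
  have hside : ∀ x y, x ∉ E → y ∉ E → F x = F y → (x ∈ C ↔ y ∈ C) := by
    intro x y hx hy hxy
    rcases hnotE x hx with ⟨hxC, p, hp, hppx⟩ | ⟨hxC, p, hp, hppx⟩ <;>
      rcases hnotE y hy with ⟨hyC, q, hq, hppy⟩ | ⟨hyC, q, hq, hppy⟩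
    · exact ⟨fun _ => hyC, fun _ => hxC⟩
    · exfalso
      rw [hxy, hq] at hp
      cases Option.some_inj.mp hp
      simp [hppx] at hppy
    · exfalso
      rw [hxy, hq] at hp
      cases Option.some_inj.mp hp
      simp [hppx] at hppy
    · exact ⟨fun h => absurd h hxC, fun h => absurd h hyC⟩
  -- adjacency outside E is determined by parts and sides
  have hsame : ∀ x y z, x ∉ E → y ∉ E → z ∉ E → F x = F y → z ≠ x → z ≠ y →
      G.Adj x z → G.Adj y z := by
    intro x y z hx hy hz hxy hzx hzy hadj
    have hx0 := hne0 x hx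
    have hy0 := hne0 y hy
    have hz0 := hne0 z hz
    rcases hnotE x hx with ⟨hxC, p, hp, hppx⟩ | ⟨hxC, p, hp, hppx⟩
    · -- x, y in C with diag true part p
      have hyC : y ∈ C := (hside x y hx hy hxy).mp hxC
      have hq : F y = some p := hxy ▸ hp
      rcases hnotE z hz with ⟨hzC, q, hqz, hppz⟩ | ⟨hzC, q, hqz, hppz⟩
      · exact hC hyC hzC (fun h => hzy h.symm)
      · -- z outside C: cross entry determined
        rcases Option.ne_none_iff_exists'.mp (hstar q p hppz hppx) with ⟨c, hc⟩
        cases c with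
        | true => exact ((hfadj z y hz0 hy0 hzy q p hqz hq).1 hc).symm
        | false => exact absurd hadj.symm ((hfadj z x hz0 hx0 hzx q p hqz hp).2 hc)
    · -- x, y outside C with diag false part p
      have hyC : y ∉ C := fun h => hxC ((hside x y hx hy hxy).mpr h)
      have hq : F y = some p := hxy ▸ hp
      rcases hnotE z hz with ⟨hzC, q, hqz, hppz⟩ | ⟨hzC, q, hqz, hppz⟩
      · -- z in C
        rcases Option.ne_none_iff_exists'.mp (hstar p q hppx hppz) with ⟨c, hc⟩
        cases c with
        | true => exact (hfadj y z hy0 hz0 (fun h => hzy h.symm) p q hq hqz).1 hc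
        | false => exact absurd hadj ((hfadj x z hx0 hz0 (fun h => hzx h.symm) p q hp hqz).2 hc)
      · exact absurd hadj (hI hxC hzC (fun h => hzx h.symm))
  -- the type map
  set κ : V → Option (Fin m) × Finset V :=
    fun x => (F x, E.filter (fun z => G.Adj x z)) with hκ
  have hcardV : (univ : Finset V).card ≤ (3 * m + 3) * #(image κ univ) := by
    apply card_le_mul_card_image
    intro a ha
    set s : Finset V := univ.filter (fun x => κ x = a) with hs
    have hsplits := card_filter_add_card_filter_not (s := s) (p := fun x => x ∈ E)
    have hin : #(s.filter (fun x => x ∈ E)) ≤ 2 * m + 2 :=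
      le_trans (card_le_card (fun x hx => (mem_filter.mp hx).2)) hEcard
    have hout : #(s.filter (fun x => ¬ x ∈ E)) ≤ m + 1 := by
      set t : Finset V := s.filter (fun x => ¬ x ∈ E) with ht
      rcases t.eq_empty_or_nonempty with h | ⟨x₀, hx₀⟩
      · simp [h]
      · have hmemt : ∀ x ∈ t, κ x = a ∧ x ∉ E := by
          intro x hx
          have := mem_filter.mp hx
          exact ⟨(mem_filter.mp this.1).2, this.2⟩
        have hFt : ∀ x ∈ t, F x = a.1 := by
          intro x hx
          rw [← (hmemt x hx).1]
        have htrace : ∀ x ∈ t, E.filter (fun z => G.Adj x z) = a.2 := by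
          intro x hx
          have := congrArg Prod.snd (hmemt x hx).1
          simpa using this
        obtain ⟨ha₀, hE₀⟩ := hmemt x₀ hx₀
        have hTwin : ∀ (b : Bool), (x₀ ∈ C ↔ b = true) → t.card ≤ m + 1 := by
          intro b hb
          apply twin_bound hsym hdiag hobs t b
          intro x hx y hy hxy
          have hxE := (hmemt x hx).2
          have hyE := (hmemt y hy).2
          have hFxy : F x = F y := by rw [hFt x hx, hFt y hy]
          have hxC : x ∈ C ↔ b = true := (hside x x₀ hxE hE₀ (by rw [hFt x hx, hFt x₀ hx₀])).trans hb
          have hyC : y ∈ C ↔ b = true := (hside y x₀ hyE hE₀ (by rw [hFt y hy, hFt x₀ hx₀])).trans hb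
          constructor
          · cases b with
            | true => simpa using hC (hxC.mpr rfl) (hyC.mpr rfl) hxy
            | false =>
              have hxI : x ∉ C := fun h => by simpa using hxC.mp h
              have hyI : y ∉ C := fun h => by simpa using hyC.mp h
              simpa using hI hxI hyI hxy
          · intro z hzx hzy
            by_cases hzE : z ∈ E
            · have h1 := htrace x hx
              have h2 := htrace y hy
              constructor
              · intro h
                have : z ∈ E.filter (fun w => G.Adj x w) := mem_filter.mpr ⟨hzE, h⟩
                rw [h1, ← h2] at this
                exact (mem_filter.mp this).2
              · intro h
                have : z ∈ E.filter (fun w => G.Adj y w) := mem_filter.mpr ⟨hzE, h⟩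
                rw [h2, ← h1] at this
                exact (mem_filter.mp this).2
            · exact ⟨fun h => hsame x y z hxE hyE hzE hFxy hzx hzy h,
                fun h => hsame y x z hyE hxE hzE hFxy.symm hzy hzx h⟩
        by_cases hb : x₀ ∈ C
        · exact hTwin true (by simp [hb])
        · exact hTwin false (by simp [hb])
    omega
  have himage : #(image κ univ) ≤ (m + 1) * 2 ^ (2 * m + 2) := by
    have hsub : image κ univ ⊆ (univ : Finset (Option (Fin m))) ×ˢ E.powerset := by
      intro a ha
      obtain ⟨x, _, hx⟩ := mem_image.mp ha
      rw [← hx]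
      exact mem_product.mpr ⟨mem_univ _, mem_powerset.mpr (filter_subset _ _)⟩
    calc #(image κ univ) ≤ #((univ : Finset (Option (Fin m))) ×ˢ E.powerset) := card_le_card hsub
      _ = (m + 1) * 2 ^ E.card := by simp [card_product, card_powerset]
      _ ≤ (m + 1) * 2 ^ (2 * m + 2) :=
        Nat.mul_le_mul_left _ (Nat.pow_le_pow_right (by norm_num) hEcard)
  calc Fintype.card V = (univ : Finset V).card := (card_univ).symm
    _ ≤ (3 * m + 3) * #(image κ univ) := hcardV
    _ ≤ (3 * m + 3) * ((m + 1) * 2 ^ (2 * m + 2)) := Nat.mul_le_mul_left _ himage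
end

section
/- Let M = M_{2n+1,n} be the (2n+1)×(2n+1) matrix with all diagonal entries 0, with M(i, 2n+1) = M(2n+1, i) = 1 for n ≤ i ≤ 2n, and all other off-diagonal entries *. The graph G from the previous construction (special vertex a; clique B of size 2n all adjacent to a; independent set B' of mates; independent set S with one vertex per n-subset of B adjacent exactly to that subset) admits no M-partition. -/
variable {V : Type*}

/-- Vertices of the exponential obstruction: `a`, the clique `B` (`Fin (2n)`), the
independent set of mates `B'` (`Fin (2n)`), and `S` (one vertex per `n`-subset of `B`). -/
abbrev Vtx (n : ℕ) :=
  (Unit ⊕ Fin (2 * n)) ⊕ (Fin (2 * n) ⊕ {T : Finset (Fin (2 * n)) // T.card = n})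

/-- Base relation: `B ∪ {a}` is a clique; `b'_j` is adjacent to `a` and to every
`b_i` with `i ≠ j`; `s_T` is adjacent exactly to the vertices `b_i` with `i ∈ T`. -/
def obsRel (n : ℕ) : Vtx n → Vtx n → Prop
  | .inl _, .inl _ => True
  | .inl (.inl _), .inr (.inl _) => True
  | .inl (.inr i), .inr (.inl j) => i ≠ j
  | .inl (.inl _), .inr (.inr _) => False
  | .inl (.inr i), .inr (.inr T) => i ∈ T.1
  | _, _ => False

/-- The split graph `G` of the construction. -/
def Gobs (n : ℕ) : SimpleGraph (Vtx n) := SimpleGraph.fromRel (obsRel n)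

/-- The matrix `M_{2n+1,n}`: zero diagonal, symmetric 1s between the last index and
the middle `n` indices (1-indexed rows `n,…,2n`), asterisks elsewhere. -/
def Mkt (n : ℕ) : Matrix (Fin (2 * n + 1)) (Fin (2 * n + 1)) (Option Bool) :=
  fun i j =>
    if i = j then some false
    else if (j = Fin.last (2 * n) ∧ n - 1 ≤ (i : ℕ)) ∨
            (i = Fin.last (2 * n) ∧ n - 1 ≤ (j : ℕ)) then some true
    else none


section Aux

open SimpleGraph

lemma Mkt_diag (n : ℕ) (i : Fin (2*n+1)) : Mkt n i i = some false := if_pos rfl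

lemma Mkt_last_right (n : ℕ) (i : Fin (2*n+1)) (h1 : i ≠ Fin.last (2*n)) (h2 : n - 1 ≤ (i:ℕ)) :
    Mkt n i (Fin.last (2*n)) = some true := by
  unfold Mkt
  rw [if_neg h1, if_pos (Or.inl ⟨rfl, h2⟩)]

lemma Mkt_last_left (n : ℕ) (j : Fin (2*n+1)) (h1 : j ≠ Fin.last (2*n)) (h2 : n - 1 ≤ (j:ℕ)) :
    Mkt n (Fin.last (2*n)) j = some true := by
  unfold Mkt
  rw [if_neg (fun h => h1 h.symm), if_pos (Or.inr ⟨rfl, h2⟩)]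

lemma adj_a_b (n : ℕ) (i : Fin (2*n)) :
    (Gobs n).Adj (Sum.inl (Sum.inl ())) (Sum.inl (Sum.inr i)) := by
  rw [Gobs, SimpleGraph.fromRel_adj]
  exact ⟨by simp, Or.inl trivial⟩

lemma adj_b_b (n : ℕ) {i j : Fin (2*n)} (h : i ≠ j) :
    (Gobs n).Adj (Sum.inl (Sum.inr i)) (Sum.inl (Sum.inr j)) := by
  rw [Gobs, SimpleGraph.fromRel_adj]
  exact ⟨by simp [h], Or.inl trivial⟩

lemma adj_a_b' (n : ℕ) (j : Fin (2*n)) :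
    (Gobs n).Adj (Sum.inl (Sum.inl ())) (Sum.inr (Sum.inl j)) := by
  rw [Gobs, SimpleGraph.fromRel_adj]
  exact ⟨by simp, Or.inl trivial⟩

lemma adj_b_b' (n : ℕ) {i j : Fin (2*n)} (h : i ≠ j) :
    (Gobs n).Adj (Sum.inl (Sum.inr i)) (Sum.inr (Sum.inl j)) := by
  rw [Gobs, SimpleGraph.fromRel_adj]
  exact ⟨by simp, Or.inl h⟩

lemma adj_b_s (n : ℕ) {i : Fin (2*n)} {T : {T : Finset (Fin (2*n)) // T.card = n}}
    (h : i ∈ T.1) :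
    (Gobs n).Adj (Sum.inl (Sum.inr i)) (Sum.inr (Sum.inr T)) := by
  rw [Gobs, SimpleGraph.fromRel_adj]
  exact ⟨by simp, Or.inl h⟩

lemma not_adj_s_a (n : ℕ) (T : {T : Finset (Fin (2*n)) // T.card = n}) :
    ¬ (Gobs n).Adj (Sum.inr (Sum.inr T)) (Sum.inl (Sum.inl ())) := by
  rw [Gobs, SimpleGraph.fromRel_adj]
  rintro ⟨-, h | h⟩ <;> exact h

lemma not_adj_b'_b' (n : ℕ) (i j : Fin (2*n)) :
    ¬ (Gobs n).Adj (Sum.inr (Sum.inl i)) (Sum.inr (Sum.inl j)) := by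
  rw [Gobs, SimpleGraph.fromRel_adj]
  rintro ⟨-, h | h⟩ <;> exact h

lemma not_adj_s_b (n : ℕ) {i : Fin (2*n)} {T : {T : Finset (Fin (2*n)) // T.card = n}}
    (h : i ∉ T.1) :
    ¬ (Gobs n).Adj (Sum.inr (Sum.inr T)) (Sum.inl (Sum.inr i)) := by
  rw [Gobs, SimpleGraph.fromRel_adj]
  rintro ⟨-, h' | h'⟩
  · exact h'
  · exact h h'

end Aux

/-- the constructed split graph admits no `M_{2n+1,n}`-partition. -/
theorem stmt14 (n : ℕ) (hn : 1 ≤ n) : ¬ HasMPartition (Mkt n) (Gobs n) := by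
  rintro ⟨f, hf⟩
  have hsame : ∀ u v : Vtx n, u ≠ v → f u = f v → ¬ (Gobs n).Adj u v := by
    intro u v huv hfe hadj
    exact (hf u v huv).2 (by rw [hfe, Mkt_diag]) hadj
  -- the map sending a and the b's to their parts
  have hinj : Function.Injective (fun x : Unit ⊕ Fin (2*n) => f (Sum.inl x)) := by
    intro x y hxy
    by_contra hne
    have hne' : (Sum.inl x : Vtx n) ≠ Sum.inl y := by simpa using hne
    rcases x with u | i <;> rcases y with u' | j
    · cases u; cases u'; exact hne rfl
    · exact hsame _ _ hne' hxy (adj_a_b n j)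
    · cases u'
      exact hsame _ _ hne' hxy ((adj_a_b n i).symm)
    · have hij : i ≠ j := by rintro rfl; exact hne rfl
      exact hsame _ _ hne' hxy (adj_b_b n hij)
  have hbij : Function.Bijective (fun x : Unit ⊕ Fin (2*n) => f (Sum.inl x)) := by
    rw [Fintype.bijective_iff_injective_and_card]
    refine ⟨hinj, ?_⟩
    simp
    omega
  have hsurj := hbij.2
  -- mates sit with their partners
  have hmate : ∀ k : Fin (2*n), f (Sum.inr (Sum.inl k)) = f (Sum.inl (Sum.inr k)) := by
    intro k
    obtain ⟨x, hx⟩ := hsurj (f (Sum.inr (Sum.inl k)))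
    simp only at hx
    rcases x with u | m
    · cases u
      exact absurd (adj_a_b' n k) (hsame _ _ (by simp) hx)
    · rcases eq_or_ne m k with rfl | hmk
      · exact hx.symm
      · exact absurd (adj_b_b' n hmk) (hsame _ _ (by simp) hx)
  -- a is in the last part
  have hfa : f (Sum.inl (Sum.inl ())) = Fin.last (2*n) := by
    by_contra hne
    obtain ⟨x, hx⟩ := hsurj (Fin.last (2*n))
    simp only at hx
    rcases x with u | k
    · cases u; exact hne hx
    · -- pick a restricted part r ≠ last avoided by a
      have hex : ∃ r : Fin (2*n+1), n - 1 ≤ (r:ℕ) ∧ (r:ℕ) < 2*n ∧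
          r ≠ f (Sum.inl (Sum.inl ())) := by
        by_cases h : f (Sum.inl (Sum.inl ())) = (⟨n-1, by omega⟩ : Fin (2*n+1))
        · refine ⟨⟨n, by omega⟩, by simp, by simp; omega, ?_⟩
          rw [h]
          intro hc
          have := congrArg Fin.val hc
          simp at this
          omega
        · exact ⟨⟨n-1, by omega⟩, by simp, by simp; omega, fun hc => h hc.symm⟩
      obtain ⟨r, hr1, hr2, hr3⟩ := hex
      obtain ⟨y, hy⟩ := hsurj r
      simp only at hy
      rcases y with u | m
      · cases u; exact hr3 hy.symm
      · have hmk : m ≠ k := by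
          rintro rfl
          rw [hy] at hx
          have := congrArg Fin.val hx
          simp [Fin.val_last] at this
          omega
        have hrlast : r ≠ Fin.last (2*n) := by
          intro hc; rw [hc] at hr2; simp only [Fin.val_last] at hr2; omega
        have hM : Mkt n (f (Sum.inr (Sum.inl m))) (f (Sum.inr (Sum.inl k)))
            = some true := by
          rw [hmate m, hmate k, hy, hx]
          exact Mkt_last_right n r hrlast hr1
        have := (hf (Sum.inr (Sum.inl m)) (Sum.inr (Sum.inl k)) (by simp [hmk])).1 hM
        exact not_adj_b'_b' n m k this
  -- the special n-set T
  set T : Finset (Fin (2*n)) :=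
    Finset.univ.filter (fun i => (f (Sum.inl (Sum.inr i)) : ℕ) < n) with hTdef
  have hT : T.card = n := by
    suffices h : T.card = (Finset.univ : Finset (Fin n)).card by simpa using h
    refine Finset.card_bij (fun i hi => ⟨(f (Sum.inl (Sum.inr i)) : ℕ), ?_⟩)
      (fun _ _ => Finset.mem_univ _) ?_ ?_
    · simp only [hTdef, Finset.mem_filter] at hi
      exact hi.2
    · intro i hi j hj hij
      simp only [Fin.mk.injEq] at hij
      have h2 : f (Sum.inl (Sum.inr i)) = f (Sum.inl (Sum.inr j)) := Fin.ext hij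
      have := hinj (a₁ := Sum.inr i) (a₂ := Sum.inr j) h2
      simpa using this
    · intro j _
      have hjlt : (j : ℕ) < 2*n + 1 := by have := j.2; omega
      obtain ⟨x, hx⟩ := hsurj ⟨(j:ℕ), hjlt⟩
      simp only at hx
      rcases x with u | m
      · cases u
        exfalso
        rw [hfa] at hx
        have := congrArg Fin.val hx
        simp [Fin.val_last] at this
        have := j.2; omega
      · refine ⟨m, ?_, ?_⟩
        · simp only [hTdef, Finset.mem_filter]
          exact ⟨Finset.mem_univ _, by rw [hx]; exact j.2⟩
        · ext; simp [hx]
  -- place s_T and derive a contradiction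
  set s : Vtx n := Sum.inr (Sum.inr ⟨T, hT⟩) with hsdef
  rcases eq_or_ne (f s) (Fin.last (2*n)) with hlast | hnl
  · -- s in part P: must be adjacent to the b in part n, which is outside T
    have hnlt : (n : ℕ) < 2*n + 1 := by omega
    obtain ⟨x, hx⟩ := hsurj ⟨n, hnlt⟩
    simp only at hx
    rcases x with u | m
    · cases u
      rw [hfa] at hx
      have := congrArg Fin.val hx
      simp [Fin.val_last] at this
      omega
    · have hmT : m ∉ T := by
        simp only [hTdef, Finset.mem_filter]
        rw [hx]
        simp
      have hM : Mkt n (f s) (f (Sum.inl (Sum.inr m))) = some true := by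
        rw [hlast, hx]
        refine Mkt_last_left n _ ?_ (by simp)
        intro hc
        have := congrArg Fin.val hc
        simp only [Fin.val_last] at this
        omega
      have := (hf s (Sum.inl (Sum.inr m)) (by simp [hsdef])).1 hM
      exact not_adj_s_b n hmT this
  · rcases lt_or_ge ((f s : ℕ)) n with hlt | hge
    · -- s in a low part: that part contains b_m with m ∈ T
      have hne' : f s ≠ f (Sum.inl (Sum.inl ())) := by
        rw [hfa]
        intro hc
        have := congrArg Fin.val hc
        simp [Fin.val_last] at this
        omega
      obtain ⟨x, hx⟩ := hsurj (f s)
      simp only at hx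
      rcases x with u | m
      · cases u; exact hne' hx.symm
      · have hmT : m ∈ T := by
          simp only [hTdef, Finset.mem_filter]
          exact ⟨Finset.mem_univ _, by rw [hx]; exact hlt⟩
        exact hsame _ s (by simp [hsdef]) hx (adj_b_s n hmT)
    · -- s in a restricted part: must be adjacent to a
      have hM : Mkt n (f s) (f (Sum.inl (Sum.inl ()))) = some true := by
        rw [hfa]
        exact Mkt_last_right n _ hnl (by omega)
      have := (hf s (Sum.inl (Sum.inl ())) (by simp [hsdef])).1 hM
      exact not_adj_s_a n ⟨T, hT⟩ this
end
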